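/- Multivariate integration by parts for independent complex Gaussian variables: let Z₁, …, Z_d be independent complex Gaussian random variables, Z_j with parameter ρ_j > 0, and let f : ℂ^d → ℂ be continuously differentiable (as a map ℝ^{2d} → ℝ²) with f and its derivative bounded. Then for each j, E[conj(Z_j) · f(Z₁,…,Z_d)] = ρ_j · E[(∂f/∂z_j)(Z₁,…,Z_d)], where ∂/∂z_j is the Wirtinger derivative in the j-th complex coordinate. -/

import Mathlib

open MeasureTheory ProbabilityTheory Complex Finset
open scoped NNReal ENNReal Real

/-- Law of a complex Gaussian variable with parameter `ρ`: the law of `Z = X + iY` where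
`X, Y` are independent real centered Gaussian variables of mean `0` and variance `ρ/2`. -/
noncomputable def complexGaussian (ρ : ℝ) : Measure ℂ :=
  ((gaussianReal 0 (ρ/2).toNNReal).prod (gaussianReal 0 (ρ/2).toNNReal)).map
    (fun p => (p.1 : ℂ) + (p.2 : ℂ) * Complex.I)


/-- Wirtinger derivative of `f : ℂ^d → ℂ` in the `j`-th complex coordinate:
`∂f/∂z_j = (1/2)(∂f/∂x_j − i ∂f/∂y_j)`. -/
noncomputable def wirtingerDerivPi {d : ℕ} (f : (Fin d → ℂ) → ℂ) (x : Fin d → ℂ)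
    (j : Fin d) : ℂ :=
  (fderiv ℝ f x (Pi.single j 1) - Complex.I * fderiv ℝ f x (Pi.single j Complex.I)) / 2

section Auxiliary
open Real

lemma gaussian_repr {v : ℝ≥0} (hv : v ≠ 0) (F : ℝ → ℂ) :
    ∫ x, F x ∂(gaussianReal 0 v) = ∫ x, gaussianPDFReal 0 v x • F x := by
  rw [gaussianReal_of_var_ne_zero 0 hv]
  have hm : Measurable (fun x => (gaussianPDFReal 0 v x).toNNReal) :=
    (measurable_gaussianPDFReal 0 v).real_toNNReal
  have h2 : (volume.withDensity (gaussianPDF 0 v))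
      = volume.withDensity (fun x => ((gaussianPDFReal 0 v x).toNNReal : ℝ≥0∞)) := rfl
  rw [h2, integral_withDensity_eq_integral_smul hm]
  congr 1
  ext x
  rw [NNReal.smul_def, Real.coe_toNNReal _ (gaussianPDFReal_nonneg 0 v x)]


lemma gaussianPDFReal_hasDerivAt (v : ℝ≥0) (x : ℝ) :
    HasDerivAt (gaussianPDFReal 0 v) (-(x / v) * gaussianPDFReal 0 v x) x := by
  have h1 : HasDerivAt (fun y : ℝ => -(y - 0)^2 / (2 * v)) (-(x/v)) x := by
    have h0 : HasDerivAt (fun y : ℝ => (y - 0)^2) (2 * x) x := by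
      simpa using hasDerivAt_pow 2 x
    have := (h0.neg).div_const (2 * (v:ℝ))
    refine this.congr_deriv ?_
    rcases eq_or_ne (v:ℝ) 0 with h | h
    · simp [h]
    · field_simp
  have h2 : HasDerivAt (fun y : ℝ => rexp (-(y - 0)^2 / (2 * v)))
      (rexp (-(x - 0)^2 / (2 * v)) * (-(x/v))) x := h1.exp
  have h3 := h2.const_mul (√(2 * π * v))⁻¹
  simp only [gaussianPDFReal]
  refine h3.congr_deriv ?_
  ring


lemma integrable_abs_mul_gaussianPDFReal (v : ℝ≥0) (hv : v ≠ 0) :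
    Integrable (fun x : ℝ => |x| * gaussianPDFReal 0 v x) := by
  have hv' : (0:ℝ) < v := lt_of_le_of_ne v.coe_nonneg (by exact_mod_cast hv.symm)
  have hb : (0:ℝ) < (2 * (v:ℝ))⁻¹ := by positivity
  have h := ((integrable_rpow_mul_exp_neg_mul_sq hb (s := 1) (by norm_num)).const_mul
    (√(2 * π * v))⁻¹).abs
  refine h.congr ?_
  filter_upwards with x
  have hx : ∀ y : ℝ, y ^ (1:ℝ) = y := fun y => Real.rpow_one y
  simp only [hx]
  rw [abs_mul, abs_mul, _root_.abs_of_nonneg (le_of_lt (Real.exp_pos _)),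
    _root_.abs_of_nonneg (by positivity : (0:ℝ) ≤ (√(2 * π * (v:ℝ)))⁻¹)]
  simp only [gaussianPDFReal]
  have he : -(x - 0)^2/(2*(v:ℝ)) = -(2*(v:ℝ))⁻¹ * x^2 := by rw [sub_zero]; ring
  rw [he]; ring


lemma gaussian_ibp_real {v : ℝ≥0} (hv : v ≠ 0) (g g' : ℝ → ℂ)
    (hderiv : ∀ x, HasDerivAt g (g' x) x) (hg'c : Continuous g')
    (C : ℝ) (hb : ∀ x, ‖g x‖ ≤ C) (hd : ∀ x, ‖g' x‖ ≤ C) :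
    ∫ x, (x : ℂ) * g x ∂(gaussianReal 0 v) = (v : ℝ) • ∫ x, g' x ∂(gaussianReal 0 v) := by
  have hv' : (0:ℝ) < v := lt_of_le_of_ne v.coe_nonneg (by exact_mod_cast hv.symm)
  set φ : ℝ → ℝ := gaussianPDFReal 0 v with hφ
  have hgc : Continuous g := by
    have : Differentiable ℝ g := fun x => (hderiv x).differentiableAt
    exact this.continuous
  have hφc : Continuous φ := by
    simp only [hφ, gaussianPDFReal_def]
    continuity
  have hφnn : ∀ x, 0 ≤ φ x := fun x => gaussianPDFReal_nonneg 0 v x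
  have hφint : Integrable φ := integrable_gaussianPDFReal 0 v
  have hxφint : Integrable (fun x => |x| * φ x) := integrable_abs_mul_gaussianPDFReal v hv
  -- h = φ • g
  have hder : ∀ x, HasDerivAt (fun y => φ y • g y)
      (φ x • g' x + (-(x / v) * φ x) • g x) x := fun x =>
    (gaussianPDFReal_hasDerivAt v x).smul (hderiv x)
  -- integrability of each piece
  have hint1 : Integrable (fun x => φ x • g' x) := by
    refine Integrable.mono' (hφint.const_mul C) (hφc.smul hg'c).aestronglyMeasurable ?_
    filter_upwards with x
    calc ‖φ x • g' x‖ = φ x * ‖g' x‖ := by rw [norm_smul, Real.norm_of_nonneg (hφnn x)]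
      _ ≤ φ x * C := mul_le_mul_of_nonneg_left (hd x) (hφnn x)
      _ = C * φ x := mul_comm _ _
  have hint2 : Integrable (fun x => (-(x / v) * φ x) • g x) := by
    refine Integrable.mono' (hxφint.const_mul (C / v))
      (((continuous_id.div_const _).neg.mul hφc).smul hgc).aestronglyMeasurable ?_
    filter_upwards with x
    rw [norm_smul]
    have : ‖-(x / (v:ℝ)) * φ x‖ = |x| / v * φ x := by
      rw [norm_mul, norm_neg, Real.norm_of_nonneg (hφnn x)]
      rw [Real.norm_eq_abs, abs_div, _root_.abs_of_nonneg hv'.le]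
    rw [this]
    calc |x| / v * φ x * ‖g x‖ ≤ |x| / v * φ x * C := by
          exact mul_le_mul_of_nonneg_left (hb x) (mul_nonneg (by positivity) (hφnn x))
      _ = C / v * (|x| * φ x) := by ring
  have hint0 : Integrable (fun x => φ x • g x) := by
    refine Integrable.mono' (hφint.const_mul C) (hφc.smul hgc).aestronglyMeasurable ?_
    filter_upwards with x
    rw [norm_smul, Real.norm_of_nonneg (hφnn x)]
    calc φ x * ‖g x‖ ≤ φ x * C := mul_le_mul_of_nonneg_left (hb x) (hφnn x)
      _ = C * φ x := mul_comm _ _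
  have hzero : ∫ x, (φ x • g' x + (-(x / v) * φ x) • g x) = 0 :=
    integral_eq_zero_of_hasDerivAt_of_integrable hder (hint1.add hint2) hint0
  rw [integral_add hint1 hint2] at hzero
  have key : ∫ x, φ x • g' x = ∫ x, (x / v * φ x) • g x := by
    have : ∀ x, (x / (v:ℝ) * φ x) • g x = -((-(x / v) * φ x) • g x) := by
      intro x; rw [← neg_smul]; ring_nf
    rw [integral_congr_ae (Filter.Eventually.of_forall this), integral_neg]
    exact eq_neg_of_add_eq_zero_left hzero
  rw [gaussian_repr hv, gaussian_repr hv, key, ← integral_smul]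
  refine integral_congr_ae (Filter.Eventually.of_forall fun x => ?_)
  simp only []
  rw [smul_smul, ← Complex.real_smul, smul_smul]
  congr 1
  field_simp
  exact mul_comm _ _


lemma integrable_of_bdd {α : Type*} [MeasurableSpace α] {μ : Measure α} [IsFiniteMeasure μ]
    {F : α → ℂ} (hm : AEStronglyMeasurable F μ) {C : ℝ} (hb : ∀ x, ‖F x‖ ≤ C) :
    Integrable F μ :=
  Integrable.mono' (integrable_const C) hm (Filter.Eventually.of_forall hb)


lemma integrable_abs_gaussianReal {v : ℝ≥0} (hv : v ≠ 0) :
    Integrable (fun x => |x|) (gaussianReal 0 v) := by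
  rw [gaussianReal_of_var_ne_zero 0 hv,
    show gaussianPDF 0 v = fun x => ((gaussianPDFReal 0 v x).toNNReal : ℝ≥0∞) from rfl,
    integrable_withDensity_iff_integrable_smul ((measurable_gaussianPDFReal 0 v).real_toNNReal)]
  refine (integrable_abs_mul_gaussianPDFReal v hv).congr ?_
  filter_upwards with x
  rw [NNReal.smul_def, Real.coe_toNNReal _ (gaussianPDFReal_nonneg 0 v x), smul_eq_mul, mul_comm]

set_option maxHeartbeats 1000000 in
lemma gaussian_ibp_complex {ρ : ℝ} (hρ : 0 < ρ) (g : ℂ → ℂ) (D : ℂ → (ℂ →L[ℝ] ℂ))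
    (hD : ∀ z, HasFDerivAt g (D z) z) (hDc : Continuous D) (C : ℝ)
    (hb : ∀ z, ‖g z‖ ≤ C) (hd : ∀ z, ‖D z‖ ≤ C) :
    ∫ z, (starRingEnd ℂ) z * g z ∂(complexGaussian ρ)
      = (ρ : ℂ) * ∫ z, (D z 1 - Complex.I * D z Complex.I) / 2 ∂(complexGaussian ρ) := by
  have hC0 : 0 ≤ C := le_trans (norm_nonneg _) (hb 0)
  set v : ℝ≥0 := (ρ/2).toNNReal with hvdef
  have hv : v ≠ 0 := by
    simp only [hvdef, ne_eq, Real.toNNReal_eq_zero, not_le]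
    positivity
  have hvρ : (v : ℝ) = ρ / 2 := Real.coe_toNNReal _ (by positivity)
  set ν : Measure ℝ := gaussianReal 0 v with hν
  set m : ℝ × ℝ → ℂ := fun p => (p.1 : ℂ) + (p.2 : ℂ) * Complex.I with hm
  have hmc : Continuous m := by
    simp only [hm]
    exact (Complex.continuous_ofReal.comp continuous_fst).add
      ((Complex.continuous_ofReal.comp continuous_snd).mul continuous_const)
  have hgc : Continuous g := Differentiable.continuous (fun z => (hD z).differentiableAt)
  -- moments
  have habs : Integrable (fun x => |x|) ν := integrable_abs_gaussianReal hv
  have hmapfst : Measure.map Prod.fst (ν.prod ν) = ν := by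
    rw [Measure.map_fst_prod]; simp
  have hmapsnd : Measure.map Prod.snd (ν.prod ν) = ν := by
    rw [Measure.map_snd_prod]; simp
  have hfst : Integrable (fun p : ℝ × ℝ => |p.1|) (ν.prod ν) := by
    rw [← hmapfst] at habs
    exact (integrable_map_measure _root_.continuous_abs.aestronglyMeasurable
      measurable_fst.aemeasurable).mp habs
  have hsnd : Integrable (fun p : ℝ × ℝ => |p.2|) (ν.prod ν) := by
    rw [← hmapsnd] at habs
    exact (integrable_map_measure _root_.continuous_abs.aestronglyMeasurable
      measurable_snd.aemeasurable).mp habs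
  have hnormm : ∀ p : ℝ × ℝ, ‖m p‖ ≤ |p.1| + |p.2| := by
    intro p
    refine (norm_add_le _ _).trans ?_
    simp [Complex.norm_real]
  -- integrability of the pieces on the product
  have hintA : Integrable (fun p : ℝ × ℝ => (p.1 : ℂ) * g (m p)) (ν.prod ν) := by
    refine Integrable.mono' (hfst.const_mul C)
      ((Complex.continuous_ofReal.comp continuous_fst).mul (hgc.comp hmc)).aestronglyMeasurable ?_
    filter_upwards with p
    rw [norm_mul, Complex.norm_real, mul_comm]
    exact mul_le_mul (hb _) le_rfl (norm_nonneg _) hC0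
  have hintB : Integrable (fun p : ℝ × ℝ => (p.2 : ℂ) * g (m p)) (ν.prod ν) := by
    refine Integrable.mono' (hsnd.const_mul C)
      ((Complex.continuous_ofReal.comp continuous_snd).mul (hgc.comp hmc)).aestronglyMeasurable ?_
    filter_upwards with p
    rw [norm_mul, Complex.norm_real, mul_comm]
    exact mul_le_mul (hb _) le_rfl (norm_nonneg _) hC0
  have hintD1 : Integrable (fun p : ℝ × ℝ => D (m p) 1) (ν.prod ν) := by
    refine integrable_of_bdd ((hDc.comp hmc).clm_apply continuous_const).aestronglyMeasurable
      (C := C) (fun p => ?_)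
    calc ‖D (m p) 1‖ ≤ ‖D (m p)‖ * ‖(1:ℂ)‖ := (D (m p)).le_opNorm 1
      _ ≤ C := by rw [norm_one, mul_one]; exact hd _
  have hintDI : Integrable (fun p : ℝ × ℝ => D (m p) Complex.I) (ν.prod ν) := by
    refine integrable_of_bdd ((hDc.comp hmc).clm_apply continuous_const).aestronglyMeasurable
      (C := C) (fun p => ?_)
    calc ‖D (m p) Complex.I‖ ≤ ‖D (m p)‖ * ‖Complex.I‖ := (D (m p)).le_opNorm _
      _ ≤ C := by rw [Complex.norm_I, mul_one]; exact hd _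
  have hintG : Integrable (fun p : ℝ × ℝ => (starRingEnd ℂ) (m p) * g (m p)) (ν.prod ν) := by
    refine Integrable.mono' ((hfst.const_mul C).add (hsnd.const_mul C))
      (((Complex.continuous_conj.comp hmc)).mul (hgc.comp hmc)).aestronglyMeasurable ?_
    filter_upwards with p
    rw [norm_mul, RCLike.norm_conj]
    simp only [Pi.add_apply]
    calc ‖m p‖ * ‖g (m p)‖ ≤ (|p.1| + |p.2|) * C :=
          mul_le_mul (hnormm p) (hb _) (norm_nonneg _) (by positivity)
      _ = C * |p.1| + C * |p.2| := by ring
  -- representation of complexGaussian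
  have hcg : complexGaussian ρ = (ν.prod ν).map m := rfl
  have hL : ∫ z, (starRingEnd ℂ) z * g z ∂(complexGaussian ρ)
      = ∫ p, (starRingEnd ℂ) (m p) * g (m p) ∂(ν.prod ν) := by
    rw [hcg]
    exact integral_map hmc.measurable.aemeasurable
      ((Complex.continuous_conj.mul hgc)).aestronglyMeasurable
  have hsplit : ∫ p, (starRingEnd ℂ) (m p) * g (m p) ∂(ν.prod ν)
      = (∫ p, (p.1:ℂ) * g (m p) ∂(ν.prod ν))
        - Complex.I * ∫ p, (p.2:ℂ) * g (m p) ∂(ν.prod ν) := by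
    rw [← integral_const_mul, ← integral_sub hintA (hintB.const_mul _)]
    refine integral_congr_ae (Filter.Eventually.of_forall fun p => ?_)
    simp only [hm, map_add, map_mul, Complex.conj_ofReal, Complex.conj_I]
    ring
  have hA : ∫ p, (p.1:ℂ) * g (m p) ∂(ν.prod ν) = (v:ℝ) • ∫ p, D (m p) 1 ∂(ν.prod ν) := by
    rw [integral_prod_symm _ hintA, integral_prod_symm _ hintD1, ← integral_smul]
    refine integral_congr_ae (Filter.Eventually.of_forall fun y => ?_)
    simp only [hm]
    have hione : ∀ x : ℝ, HasDerivAt (fun t : ℝ => ((t:ℂ) + (y:ℂ) * Complex.I)) 1 x := by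
      intro x
      simpa using (Complex.ofRealCLM.hasDerivAt (x := x)).add_const ((y:ℂ) * Complex.I)
    exact gaussian_ibp_real hv (fun t => g ((t:ℂ) + (y:ℂ) * Complex.I))
      (fun t => D ((t:ℂ) + (y:ℂ) * Complex.I) 1)
      (fun x => by exact (hD _).comp_hasDerivAt x (hione x))
      ((hDc.comp (Complex.continuous_ofReal.add continuous_const)).clm_apply continuous_const)
      C (fun x => hb _)
      (fun x => by
        calc ‖D ((x:ℂ) + (y:ℂ) * Complex.I) 1‖ ≤ ‖D _‖ * ‖(1:ℂ)‖ := (D _).le_opNorm 1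
          _ ≤ C := by rw [norm_one, mul_one]; exact hd _)
  have hB : ∫ p, (p.2:ℂ) * g (m p) ∂(ν.prod ν) = (v:ℝ) • ∫ p, D (m p) Complex.I ∂(ν.prod ν) := by
    rw [integral_prod _ hintB, integral_prod _ hintDI, ← integral_smul]
    refine integral_congr_ae (Filter.Eventually.of_forall fun x => ?_)
    simp only [hm]
    have hione : ∀ y : ℝ, HasDerivAt (fun t : ℝ => ((x:ℂ) + (t:ℂ) * Complex.I)) Complex.I y := by
      intro y
      have h1 := ((Complex.ofRealCLM.hasDerivAt (x := y)).mul_const Complex.I).const_add (x:ℂ)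
      simpa using h1
    exact gaussian_ibp_real hv (fun t => g ((x:ℂ) + (t:ℂ) * Complex.I))
      (fun t => D ((x:ℂ) + (t:ℂ) * Complex.I) Complex.I)
      (fun y => by exact (hD _).comp_hasDerivAt y (hione y))
      ((hDc.comp (continuous_const.add
        (Complex.continuous_ofReal.mul continuous_const))).clm_apply continuous_const)
      C (fun y => hb _)
      (fun y => by
        calc ‖D ((x:ℂ) + (y:ℂ) * Complex.I) Complex.I‖ ≤ ‖D _‖ * ‖Complex.I‖ :=
              (D _).le_opNorm _
          _ ≤ C := by rw [Complex.norm_I, mul_one]; exact hd _)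
  have hR : ∫ z, (D z 1 - Complex.I * D z Complex.I) / 2 ∂(complexGaussian ρ)
      = ((∫ p, D (m p) 1 ∂(ν.prod ν)) - Complex.I * ∫ p, D (m p) Complex.I ∂(ν.prod ν)) / 2 := by
    rw [hcg, integral_map hmc.measurable.aemeasurable]
    · rw [← integral_const_mul, ← integral_sub hintD1 (hintDI.const_mul _), ← integral_div]
    · exact (((hDc.clm_apply continuous_const).sub
        (continuous_const.mul (hDc.clm_apply continuous_const))).div_const 2).aestronglyMeasurable
  rw [hL, hsplit, hA, hB, hR, hvρ]
  simp only [Complex.real_smul]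
  push_cast
  ring

lemma integrable_norm_complexGaussian {ρ : ℝ} (hρ : 0 < ρ) :
    Integrable (fun z => ‖z‖) (complexGaussian ρ) := by
  have hv : (ρ/2).toNNReal ≠ 0 := by
    simp only [ne_eq, Real.toNNReal_eq_zero, not_le]; positivity
  set v : ℝ≥0 := (ρ/2).toNNReal
  set ν : Measure ℝ := gaussianReal 0 v with hν
  set m : ℝ × ℝ → ℂ := fun p => (p.1 : ℂ) + (p.2 : ℂ) * Complex.I with hm
  have hmc : Continuous m :=
    (Complex.continuous_ofReal.comp continuous_fst).add
      ((Complex.continuous_ofReal.comp continuous_snd).mul continuous_const)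
  have habs : Integrable (fun x => |x|) ν := integrable_abs_gaussianReal hv
  have hmapfst : Measure.map Prod.fst (ν.prod ν) = ν := by
    rw [Measure.map_fst_prod]; simp
  have hmapsnd : Measure.map Prod.snd (ν.prod ν) = ν := by
    rw [Measure.map_snd_prod]; simp
  have hfst : Integrable (fun p : ℝ × ℝ => |p.1|) (ν.prod ν) := by
    rw [← hmapfst] at habs
    exact (integrable_map_measure _root_.continuous_abs.aestronglyMeasurable
      measurable_fst.aemeasurable).mp habs
  have hsnd : Integrable (fun p : ℝ × ℝ => |p.2|) (ν.prod ν) := by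
    rw [← hmapsnd] at habs
    exact (integrable_map_measure _root_.continuous_abs.aestronglyMeasurable
      measurable_snd.aemeasurable).mp habs
  have hcg : complexGaussian ρ = (ν.prod ν).map m := rfl
  rw [hcg]
  rw [integrable_map_measure continuous_norm.aestronglyMeasurable hmc.measurable.aemeasurable]
  refine Integrable.mono' (hfst.add hsnd) (hmc.norm.aestronglyMeasurable) ?_
  filter_upwards with p
  simp only [Function.comp_apply, Pi.add_apply, norm_norm, hm]
  refine (norm_add_le _ _).trans ?_
  simp [Complex.norm_real]

end Auxiliary

/-- Multivariate integration by parts: for independent complex Gaussian variables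
`Z₁, …, Z_d`, `Z_j` with parameter `ρ_j > 0`, and `f : ℂ^d → ℂ` continuously differentiable
with `f` and its derivative bounded,
`E[conj(Z_j)·f(Z₁,…,Z_d)] = ρ_j·E[(∂f/∂z_j)(Z₁,…,Z_d)]`. -/
theorem complex_gaussian_multivariate_integration_by_parts
    {Ω : Type*} [MeasurableSpace Ω] (P : Measure Ω) [IsProbabilityMeasure P]
    (d : ℕ) (Z : Fin d → Ω → ℂ) (hZmeas : ∀ j, Measurable (Z j))
    (ρ : Fin d → ℝ) (hρ : ∀ j, 0 < ρ j)
    (hZ : ∀ j, Measure.map (Z j) P = complexGaussian (ρ j))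
    (hindep : iIndepFun Z P)
    (f : (Fin d → ℂ) → ℂ) (hf : ContDiff ℝ 1 f) (C : ℝ)
    (hfb : ∀ x, ‖f x‖ ≤ C) (hfd : ∀ x, ‖fderiv ℝ f x‖ ≤ C) (j : Fin d) :
    ∫ ω, (starRingEnd ℂ) (Z j ω) * f (fun i => Z i ω) ∂P
      = (ρ j : ℂ) * ∫ ω, wirtingerDerivPi f (fun i => Z i ω) j ∂P := by
  classical
  have hC0 : 0 ≤ C := le_trans (norm_nonneg _) (hfb 0)
  set T : Finset (Fin d) := {j}ᶜ with hT
  set R : Ω → (T → ℂ) := fun ω i => Z i ω with hR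
  have hRmeas : Measurable R := measurable_pi_lambda _ fun i => hZmeas i
  -- independence of Z j and the rest
  have hJR : IndepFun (Z j) R P := by
    have h := hindep.indepFun_finset {j} T (by simp [hT]) hZmeas
    have h2 := h.comp (φ := fun w : ({j} : Finset (Fin d)) → ℂ =>
      w ⟨j, Finset.mem_singleton_self j⟩) (ψ := id) (measurable_pi_apply _ : Measurable fun w : ({j} : Finset (Fin d)) → ℂ =>
      w ⟨j, Finset.mem_singleton_self j⟩) measurable_id
    exact h2
  set μj : Measure ℂ := complexGaussian (ρ j) with hμj
  set ν : Measure (T → ℂ) := Measure.map R P with hνdef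
  have : IsProbabilityMeasure ν := Measure.isProbabilityMeasure_map hRmeas.aemeasurable
  have : IsProbabilityMeasure μj := by
    rw [hμj, ← hZ j]; exact Measure.isProbabilityMeasure_map (hZmeas j).aemeasurable
  set Φ : Ω → ℂ × (T → ℂ) := fun ω => (Z j ω, R ω) with hΦ
  have hΦmeas : Measurable Φ := (hZmeas j).prodMk hRmeas
  have hmap : Measure.map Φ P = μj.prod ν := by
    rw [hμj, ← hZ j, hνdef]
    exact (indepFun_iff_map_prod_eq_prod_map_map (hZmeas j).aemeasurable
      hRmeas.aemeasurable).mp hJR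
  -- the reconstruction map
  set ext : (T → ℂ) → (Fin d → ℂ) := fun w i => if h : i ∈ T then w ⟨i, h⟩ else 0 with hext
  have hextc : Continuous ext := by
    refine continuous_pi fun i => ?_
    by_cases h : i ∈ T
    · simp only [hext, dif_pos h]; exact continuous_apply _
    · simp only [hext, dif_neg h]; exact continuous_const
  set e : ℂ × (T → ℂ) → (Fin d → ℂ) := fun p => Function.update (ext p.2) j p.1 with he
  have hec : Continuous e := by
    have : e = (fun q : (Fin d → ℂ) × ℂ => Function.update q.1 j q.2) ∘
        (fun p => (ext p.2, p.1)) := rfl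
    rw [this]
    exact (continuous_update j).comp ((hextc.comp continuous_snd).prodMk continuous_fst)
  have heZ : ∀ ω, e (Φ ω) = fun i => Z i ω := by
    intro ω
    funext i
    by_cases hij : i = j
    · subst hij; simp [he, hΦ]
    · have hiT : i ∈ T := by simp [hT, hij]
      simp only [he, hΦ, Function.update_of_ne hij, hext, dif_pos hiT, hR]
  -- the injection CLM
  set Lj : ℂ →L[ℝ] (Fin d → ℂ) :=
    ContinuousLinearMap.pi (Pi.single j (ContinuousLinearMap.id ℝ ℂ)) with hLj
  have hLj_apply : ∀ c : ℂ, Lj c = Pi.single j c := by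
    intro c
    funext i
    by_cases h : i = j
    · subst h; simp [hLj]
    · simp [hLj, ContinuousLinearMap.pi_apply, Pi.single_eq_of_ne h]
  have hLjnorm : ‖Lj‖ ≤ 1 := by
    refine ContinuousLinearMap.opNorm_le_bound _ zero_le_one fun c => ?_
    rw [hLj_apply, Pi.norm_single, one_mul]
  have hfdiff : Differentiable ℝ f := hf.differentiable one_ne_zero
  have hDfc : Continuous (fderiv ℝ f) := hf.continuous_fderiv one_ne_zero
  have hfc : Continuous f := hfdiff.continuous
  -- derivative data for the partial functions
  set D : ℂ × (T → ℂ) → (ℂ →L[ℝ] ℂ) := fun p => (fderiv ℝ f (e p)).comp Lj with hD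
  have hDder : ∀ (w : T → ℂ) (z : ℂ),
      HasFDerivAt (fun z' => f (e (z', w))) (D (z, w)) z := by
    intro w z
    exact ((hfdiff _).hasFDerivAt).comp z (hasFDerivAt_update (ext w) z)
  have hDc : Continuous D := (hDfc.comp hec).clm_comp continuous_const
  have hDbound : ∀ p, ‖D p‖ ≤ C := by
    intro p
    calc ‖D p‖ ≤ ‖fderiv ℝ f (e p)‖ * ‖Lj‖ := ContinuousLinearMap.opNorm_comp_le _ _
      _ ≤ C * 1 := mul_le_mul (hfd _) hLjnorm (norm_nonneg _) hC0
      _ = C := mul_one C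
  have hDwirt : ∀ p : ℂ × (T → ℂ),
      (D p 1 - Complex.I * D p Complex.I) / 2 = wirtingerDerivPi f (e p) j := by
    intro p
    simp only [hD, ContinuousLinearMap.comp_apply, hLj_apply, wirtingerDerivPi]
  -- integrability on the product measure
  have hnorm1 : Integrable (fun p : ℂ × (T → ℂ) => ‖p.1‖) (μj.prod ν) := by
    have h1 : Integrable (fun z : ℂ => ‖z‖) μj := integrable_norm_complexGaussian (hρ j)
    have hmapfst : Measure.map Prod.fst (μj.prod ν) = μj := by
      rw [Measure.map_fst_prod]; simp
    rw [← hmapfst] at h1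
    exact (integrable_map_measure continuous_norm.aestronglyMeasurable
      measurable_fst.aemeasurable).mp h1
  have hint1 : Integrable (fun p : ℂ × (T → ℂ) => (starRingEnd ℂ) p.1 * f (e p)) (μj.prod ν) := by
    refine Integrable.mono' (hnorm1.const_mul C)
      ((Complex.continuous_conj.comp continuous_fst).mul (hfc.comp hec)).aestronglyMeasurable ?_
    filter_upwards with p
    rw [norm_mul, RCLike.norm_conj, mul_comm]
    exact mul_le_mul (hfb _) le_rfl (norm_nonneg _) hC0
  have hwirtc : Continuous (fun p : ℂ × (T → ℂ) => wirtingerDerivPi f (e p) j) := by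
    simp only [wirtingerDerivPi]
    exact ((((hDfc.comp hec).clm_apply continuous_const).sub
      (continuous_const.mul ((hDfc.comp hec).clm_apply continuous_const))).div_const 2)
  have hintW : Integrable (fun p : ℂ × (T → ℂ) => wirtingerDerivPi f (e p) j) (μj.prod ν) := by
    refine integrable_of_bdd hwirtc.aestronglyMeasurable (C := C) fun p => ?_
    rw [← hDwirt]
    have h1 : ‖D p 1‖ ≤ C := by
      calc ‖D p 1‖ ≤ ‖D p‖ * ‖(1:ℂ)‖ := (D p).le_opNorm 1
        _ ≤ C := by rw [norm_one, mul_one]; exact hDbound p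
    have h2 : ‖D p Complex.I‖ ≤ C := by
      calc ‖D p Complex.I‖ ≤ ‖D p‖ * ‖Complex.I‖ := (D p).le_opNorm _
        _ ≤ C := by rw [Complex.norm_I, mul_one]; exact hDbound p
    calc ‖(D p 1 - Complex.I * D p Complex.I) / 2‖
        = ‖D p 1 - Complex.I * D p Complex.I‖ / 2 := by
          rw [norm_div, Complex.norm_ofNat]
      _ ≤ (‖D p 1‖ + ‖Complex.I * D p Complex.I‖) / 2 := by
          gcongr; exact norm_sub_le _ _
      _ ≤ (C + C) / 2 := by
          rw [norm_mul, Complex.norm_I, one_mul]; gcongr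
      _ = C := by ring
  -- main computation
  calc ∫ ω, (starRingEnd ℂ) (Z j ω) * f (fun i => Z i ω) ∂P
      = ∫ ω, (starRingEnd ℂ) ((Φ ω).1) * f (e (Φ ω)) ∂P := by
        refine integral_congr_ae (Filter.Eventually.of_forall fun ω => ?_)
        simp only [heZ]
        rfl
    _ = ∫ p, (starRingEnd ℂ) p.1 * f (e p) ∂(Measure.map Φ P) :=
        (integral_map hΦmeas.aemeasurable
          ((Complex.continuous_conj.comp continuous_fst).mul
            (hfc.comp hec)).aestronglyMeasurable).symm
    _ = ∫ p, (starRingEnd ℂ) p.1 * f (e p) ∂(μj.prod ν) := by rw [hmap]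
    _ = ∫ w, ∫ z, (starRingEnd ℂ) z * f (e (z, w)) ∂μj ∂ν := integral_prod_symm _ hint1
    _ = ∫ w, (ρ j : ℂ) * ∫ z, wirtingerDerivPi f (e (z, w)) j ∂μj ∂ν := by
        refine integral_congr_ae (Filter.Eventually.of_forall fun w => ?_)
        have hibp := gaussian_ibp_complex (hρ j) (fun z => f (e (z, w)))
          (fun z => D (z, w)) (hDder w)
          (hDc.comp (continuous_id.prodMk continuous_const)) C
          (fun z => hfb _) (fun z => hDbound _)
        show ∫ z, (starRingEnd ℂ) z * f (e (z, w)) ∂μj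
          = (ρ j : ℂ) * ∫ z, wirtingerDerivPi f (e (z, w)) j ∂μj
        have h2 : ∫ z, wirtingerDerivPi f (e (z, w)) j ∂μj
            = ∫ z, (D (z, w) 1 - Complex.I * D (z, w) Complex.I) / 2 ∂μj :=
          integral_congr_ae (Filter.Eventually.of_forall fun z => (hDwirt (z, w)).symm)
        rw [h2, hμj]
        exact hibp
    _ = (ρ j : ℂ) * ∫ w, ∫ z, wirtingerDerivPi f (e (z, w)) j ∂μj ∂ν := integral_const_mul _ _
    _ = (ρ j : ℂ) * ∫ p, wirtingerDerivPi f (e p) j ∂(μj.prod ν) := by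
        rw [integral_prod_symm _ hintW]
    _ = (ρ j : ℂ) * ∫ p, wirtingerDerivPi f (e p) j ∂(Measure.map Φ P) := by rw [hmap]
    _ = (ρ j : ℂ) * ∫ ω, wirtingerDerivPi f (e (Φ ω)) j ∂P := by
        rw [integral_map hΦmeas.aemeasurable hwirtc.aestronglyMeasurable]
    _ = (ρ j : ℂ) * ∫ ω, wirtingerDerivPi f (fun i => Z i ω) j ∂P := by
        congr 1
        refine integral_congr_ae (Filter.Eventually.of_forall fun ω => ?_)
        simp only [heZ]
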